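/- Let S₁, …, Sₙ : V → W and T : V → Z be linear transformations. Then ⋂_{i=1}^n ker Sᵢ ⊆ ker T if and only if there exist linear transformations P₁, …, Pₙ : W → Z such that T = P₁∘S₁ + ⋯ + Pₙ∘Sₙ. -/

import Mathlib

theorem stmt_2 {D V W Z : Type*} [DivisionRing D]
    [AddCommGroup V] [Module D V] [AddCommGroup W] [Module D W]
    [AddCommGroup Z] [Module D Z]
    (n : ℕ) (hn : 0 < n) (S : Fin n → (V →ₗ[D] W)) (T : V →ₗ[D] Z) :
    (⨅ i, LinearMap.ker (S i)) ≤ LinearMap.ker T ↔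
      ∃ P : Fin n → (W →ₗ[D] Z), T = ∑ i, (P i).comp (S i) := by
  constructor
  · intro h
    set S' : V →ₗ[D] (Fin n → W) := LinearMap.pi S with hS'
    have hker : LinearMap.ker S' ≤ LinearMap.ker T := by
      rw [LinearMap.ker_pi]; exact h
    -- factor T through S' on the range of S', then extend
    let e := (LinearMap.quotKerEquivRange S').symm
    let f : LinearMap.range S' →ₗ[D] Z :=
      ((LinearMap.ker S').liftQ T hker).comp e.toLinearMap
    obtain ⟨g, hg⟩ := LinearMap.exists_extend f
    have hgS : ∀ v, g (S' v) = T v := by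
      intro v
      have h1 : (⟨S' v, LinearMap.mem_range_self S' v⟩ : LinearMap.range S')
          = (LinearMap.quotKerEquivRange S') (Submodule.Quotient.mk v) := by
        ext; simp [LinearMap.quotKerEquivRange]
      have : g (S' v) = f ⟨S' v, LinearMap.mem_range_self S' v⟩ := by
        rw [← hg]; rfl
      rw [this, h1]
      simp [f, e]
    refine ⟨fun i => g.comp (LinearMap.single D (fun _ => W) i), ?_⟩
    ext v
    have : ∑ i, (LinearMap.single D (fun _ : Fin n => W) i) (S i v) = S' v := by
      simpa [hS'] using Finset.univ_sum_single (S' v)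
    simp only [LinearMap.sum_apply, LinearMap.comp_apply]
    rw [← map_sum g, this, hgS]
  · rintro ⟨P, rfl⟩ v hv
    simp only [Submodule.mem_iInf, LinearMap.mem_ker] at hv
    simp [LinearMap.mem_ker, hv]
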